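/- (KKT necessity for convex QP under Slater's condition) Let Q be symmetric positive semidefinite and suppose there exists x̄ with Ax̄ = b and Gx̄ < h componentwise. If x* minimizes ½xᵀQx + qᵀx over {x : Gx ≤ h, Ax = b}, then there exist λ* ≥ 0 and ν* such that Qx* + q + Aᵀν* + Gᵀλ* = 0 and λ*ᵢ(Gx* − h)ᵢ = 0 for all i. -/

import Mathlib

open Matrix

lemma farkas_fin {n : ℕ} : ∀ (k : ℕ) (a : Fin k → (Fin n → ℝ)) (c : Fin n → ℝ),
    (∀ x : Fin n → ℝ, (∀ i, a i ⬝ᵥ x ≤ 0) → c ⬝ᵥ x ≤ 0) →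
    ∃ μ : Fin k → ℝ, (∀ i, 0 ≤ μ i) ∧ c = ∑ i, μ i • a i := by
  intro k
  induction k with
  | zero =>
    intro a c hc
    refine ⟨0, fun i => le_refl _, ?_⟩
    have h1 := hc c (fun i => i.elim0)
    have h2 : (0:ℝ) ≤ c ⬝ᵥ c := Finset.sum_nonneg fun i _ => mul_self_nonneg _
    simpa using dotProduct_self_eq_zero.mp (le_antisymm h1 h2)
  | succ k ih =>
    intro a c hc
    by_cases hA : ∀ x : Fin n → ℝ, (∀ i : Fin k, a i.castSucc ⬝ᵥ x ≤ 0) → c ⬝ᵥ x ≤ 0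
    · obtain ⟨μ, hμ, hsum⟩ := ih (fun i => a i.castSucc) c hA
      refine ⟨Fin.snoc μ 0, ?_, ?_⟩
      · intro i
        refine Fin.lastCases ?_ ?_ i
        · simp
        · intro j; simpa using hμ j
      · rw [Fin.sum_univ_castSucc]
        simp [Fin.snoc_castSucc, Fin.snoc_last, hsum]
    · push_neg at hA
      obtain ⟨x0, h0, hc0⟩ := hA
      set t := a (Fin.last k) ⬝ᵥ x0 with ht_def
      have ht : 0 < t := by
        by_contra hle
        rw [not_lt] at hle
        have : ∀ i : Fin (k+1), a i ⬝ᵥ x0 ≤ 0 := by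
          intro i
          refine Fin.lastCases ?_ ?_ i
          · exact hle
          · exact h0
        exact absurd (hc x0 this) (not_le.mpr hc0)
      set a' : Fin k → (Fin n → ℝ) :=
        fun i => a i.castSucc - ((a i.castSucc ⬝ᵥ x0)/t) • a (Fin.last k) with ha'
      set c' : Fin n → ℝ := c - ((c ⬝ᵥ x0)/t) • a (Fin.last k) with hc'
      have hkey : ∀ x : Fin n → ℝ, (∀ i, a' i ⬝ᵥ x ≤ 0) → c' ⬝ᵥ x ≤ 0 := by
        intro x hx
        set x' := x - ((a (Fin.last k) ⬝ᵥ x)/t) • x0 with hx'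
        have hlast : a (Fin.last k) ⬝ᵥ x' = 0 := by
          rw [hx', dotProduct_sub, dotProduct_smul, smul_eq_mul, ← ht_def]
          rw [div_mul_cancel₀ _ ht.ne', sub_self]
        have hrow : ∀ i : Fin k, a i.castSucc ⬝ᵥ x' = a' i ⬝ᵥ x := by
          intro i
          rw [hx', ha']
          simp only [dotProduct_sub, dotProduct_smul, sub_dotProduct, smul_dotProduct,
            smul_eq_mul]
          field_simp
        have hcx : c ⬝ᵥ x' = c' ⬝ᵥ x := by
          rw [hx', hc']
          simp only [dotProduct_sub, dotProduct_smul, sub_dotProduct, smul_dotProduct,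
            smul_eq_mul]
          field_simp
        rw [← hcx]
        apply hc
        intro i
        refine Fin.lastCases ?_ ?_ i
        · exact le_of_eq hlast
        · intro j; rw [hrow j]; exact hx j
      obtain ⟨μ, hμ, hsum⟩ := ih a' c' hkey
      refine ⟨Fin.snoc μ ((c ⬝ᵥ x0 - ∑ i, μ i * (a i.castSucc ⬝ᵥ x0))/t), ?_, ?_⟩
      · intro i
        refine Fin.lastCases ?_ ?_ i
        · rw [Fin.snoc_last]
          apply div_nonneg _ ht.le
          have : ∑ i, μ i * (a i.castSucc ⬝ᵥ x0) ≤ 0 :=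
            Finset.sum_nonpos fun i _ => mul_nonpos_of_nonneg_of_nonpos (hμ i) (h0 i)
          linarith
        · intro j; simpa using hμ j
      · rw [Fin.sum_univ_castSucc]
        simp only [Fin.snoc_castSucc, Fin.snoc_last]
        have e1 : c = c' + ((c ⬝ᵥ x0)/t) • a (Fin.last k) := by rw [hc']; abel
        conv_lhs => rw [e1, hsum]
        have e2 : ∀ i : Fin k,
            μ i • (a i.castSucc - ((a i.castSucc ⬝ᵥ x0)/t) • a (Fin.last k))
            = μ i • a i.castSucc - (μ i * (a i.castSucc ⬝ᵥ x0)/t) • a (Fin.last k) := by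
          intro i
          rw [smul_sub, smul_smul]
          ring_nf
        simp only [ha', e2]
        rw [Finset.sum_sub_distrib, ← Finset.sum_smul, sub_add_eq_add_sub, add_sub_assoc,
          ← sub_smul]
        congr 2
        rw [sub_div, Finset.sum_div]

lemma farkas {n : ℕ} {ι : Type*} [Fintype ι] (a : ι → Fin n → ℝ) (c : Fin n → ℝ)
    (hc : ∀ x : Fin n → ℝ, (∀ i, a i ⬝ᵥ x ≤ 0) → c ⬝ᵥ x ≤ 0) :
    ∃ μ : ι → ℝ, (∀ i, 0 ≤ μ i) ∧ c = ∑ i, μ i • a i := by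
  obtain ⟨μ, hμ, hsum⟩ := farkas_fin (Fintype.card ι) (fun j => a ((Fintype.equivFin ι).symm j)) c
    (by
      intro x hx
      apply hc x
      intro i
      simpa using hx ((Fintype.equivFin ι) i))
  refine ⟨fun i => μ ((Fintype.equivFin ι) i), fun i => hμ _, ?_⟩
  rw [hsum]
  exact (Fintype.sum_equiv (Fintype.equivFin ι) _ _ (by intro i; simp)).symm


theorem kkt_necessity_convex_qp_slater {n m p : ℕ}
    (Q : Matrix (Fin n) (Fin n) ℝ) (hQ : Q.PosSemidef)
    (q : Fin n → ℝ)
    (G : Matrix (Fin m) (Fin n) ℝ) (h : Fin m → ℝ)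
    (A : Matrix (Fin p) (Fin n) ℝ) (b : Fin p → ℝ)
    (hslater : ∃ xbar : Fin n → ℝ, A *ᵥ xbar = b ∧ ∀ i, (G *ᵥ xbar) i < h i)
    (xs : Fin n → ℝ)
    (hfeas_eq : A *ᵥ xs = b) (hfeas_ineq : ∀ i, (G *ᵥ xs) i ≤ h i)
    (hopt : ∀ x : Fin n → ℝ, A *ᵥ x = b → (∀ i, (G *ᵥ x) i ≤ h i) →
      (1/2) * (xs ⬝ᵥ Q *ᵥ xs) + q ⬝ᵥ xs ≤ (1/2) * (x ⬝ᵥ Q *ᵥ x) + q ⬝ᵥ x) :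
    ∃ (lam : Fin m → ℝ) (nu : Fin p → ℝ),
      (∀ i, 0 ≤ lam i) ∧
      Q *ᵥ xs + q + Aᵀ *ᵥ nu + Gᵀ *ᵥ lam = 0 ∧
      (∀ i, lam i * ((G *ᵥ xs) i - h i) = 0) := by
  classical
  set c : Fin n → ℝ := Q *ᵥ xs + q with hc_def
  have hQt : Qᵀ = Q := by
    have := hQ.1; rwa [Matrix.IsHermitian, conjTranspose_eq_transpose_of_trivial] at this
  have hsym : ∀ u v : Fin n → ℝ, u ⬝ᵥ Q *ᵥ v = v ⬝ᵥ Q *ᵥ u := by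
    intro u v
    rw [dotProduct_mulVec, ← mulVec_transpose, hQt]
    exact dotProduct_comm _ _
  -- Step 1 : variational inequality
  have hvar : ∀ x : Fin n → ℝ, A *ᵥ x = b → (∀ i, (G *ᵥ x) i ≤ h i) →
      0 ≤ c ⬝ᵥ (x - xs) := by
    intro x hxA hxG
    set d : Fin n → ℝ := x - xs with hd_def
    set r : ℝ := d ⬝ᵥ Q *ᵥ d with hr_def
    have hr : 0 ≤ r := by
      have := hQ.dotProduct_mulVec_nonneg d
      simpa [hr_def] using this
    have expand : ∀ t : ℝ, (xs + t • d) ⬝ᵥ Q *ᵥ (xs + t • d)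
        = xs ⬝ᵥ Q *ᵥ xs + 2*t*(d ⬝ᵥ Q *ᵥ xs) + t^2 * r := by
      intro t
      rw [hr_def]
      simp only [mulVec_add, mulVec_smul, dotProduct_add, add_dotProduct,
        dotProduct_smul, smul_dotProduct, smul_eq_mul, hsym xs d]
      ring
    have key : ∀ t : ℝ, 0 < t → t ≤ 1 → 0 ≤ c ⬝ᵥ d + t/2 * r := by
      intro t ht0 ht1
      have hfeasA : A *ᵥ (xs + t • d) = b := by
        rw [mulVec_add, mulVec_smul, hd_def, mulVec_sub, hxA, hfeas_eq]
        simp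
      have hfeasG : ∀ i, (G *ᵥ (xs + t • d)) i ≤ h i := by
        intro i
        have : (G *ᵥ (xs + t • d)) i
            = (1 - t) * (G *ᵥ xs) i + t * (G *ᵥ x) i := by
          rw [hd_def]
          simp only [mulVec_add, mulVec_smul, mulVec_sub, Pi.add_apply, Pi.smul_apply,
            Pi.sub_apply, smul_eq_mul]
          ring
        rw [this]
        have h1 := hfeas_ineq i
        have h2 := hxG i
        nlinarith
      have hineq := hopt (xs + t • d) hfeasA hfeasG
      rw [expand t] at hineq
      have hq : q ⬝ᵥ (xs + t • d) = q ⬝ᵥ xs + t * (q ⬝ᵥ d) := by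
        simp [dotProduct_add, dotProduct_smul]
      rw [hq] at hineq
      have hcd : c ⬝ᵥ d = d ⬝ᵥ Q *ᵥ xs + q ⬝ᵥ d := by
        rw [hc_def, add_dotProduct, dotProduct_comm]
      rw [hcd]
      nlinarith [hineq, ht0]
    by_contra hneg
    rw [not_le] at hneg
    set t : ℝ := min 1 ((-(c ⬝ᵥ d))/(r+1)) with ht_def
    have ht0 : 0 < t := by
      apply lt_min one_pos
      apply div_pos (by linarith) (by linarith)
    have ht1 : t ≤ 1 := min_le_left _ _
    have ht2 : t ≤ (-(c ⬝ᵥ d))/(r+1) := min_le_right _ _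
    have := key t ht0 ht1
    have htr : t * (r+1) ≤ -(c ⬝ᵥ d) := by
      rw [← le_div_iff₀ (by linarith : (0:ℝ) < r+1)] at *
      exact ht2
    nlinarith
  -- Step 2 : Farkas
  obtain ⟨xbar, hxbarA, hxbarG⟩ := hslater
  set e : Fin n → ℝ := xbar - xs with he_def
  have hAe : A *ᵥ e = 0 := by
    rw [he_def, mulVec_sub, hxbarA, hfeas_eq, sub_self]
  set act : Fin m → Prop := fun i => (G *ᵥ xs) i = h i with hact_def
  set a : ({i : Fin m // act i} ⊕ (Fin p ⊕ Fin p)) → (Fin n → ℝ) :=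
    Sum.elim (fun s => G s.1) (Sum.elim (fun j => A j) (fun j => -(A j))) with ha_def
  have hfark : ∀ d : Fin n → ℝ, (∀ w, a w ⬝ᵥ d ≤ 0) → (-c) ⬝ᵥ d ≤ 0 := by
    intro d hd
    have hAd : A *ᵥ d = 0 := by
      funext j
      have h1 : A j ⬝ᵥ d ≤ 0 := hd (Sum.inr (Sum.inl j))
      have h2 : (-(A j)) ⬝ᵥ d ≤ 0 := hd (Sum.inr (Sum.inr j))
      rw [neg_dotProduct, neg_nonpos] at h2
      have : (A *ᵥ d) j = A j ⬝ᵥ d := rfl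
      rw [this]
      simpa using le_antisymm h1 h2
    have hGd : ∀ i, act i → (G *ᵥ d) i ≤ 0 := by
      intro i hi
      exact hd (Sum.inl ⟨i, hi⟩)
    -- show 0 ≤ c ⬝ᵥ d
    suffices hgoal : 0 ≤ c ⬝ᵥ d by
      rw [neg_dotProduct]
      linarith
    have hstep : ∀ ε : ℝ, 0 < ε → 0 ≤ c ⬝ᵥ (d + ε • e) := by
      intro ε hε
      set v : Fin n → ℝ := d + ε • e with hv_def
      have hGv_act : ∀ i, act i → (G *ᵥ v) i < 0 := by
        intro i hi
        have h1 : (G *ᵥ v) i = (G *ᵥ d) i + ε * ((G *ᵥ xbar) i - (G *ᵥ xs) i) := by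
          rw [hv_def, he_def]
          simp [mulVec_add, mulVec_smul, mulVec_sub]
        rw [h1]
        have h2 := hGd i hi
        have h3 := hxbarG i
        have hi' : (G *ᵥ xs) i = h i := hi
        nlinarith
      set u : Fin m → ℝ := fun i => if 0 < (G *ᵥ v) i
        then (h i - (G *ᵥ xs) i)/((G *ᵥ v) i) else 1 with hu_def
      set T : Finset ℝ := insert 1 (Finset.univ.image u) with hT_def
      have hTne : T.Nonempty := Finset.insert_nonempty _ _
      set t : ℝ := T.min' hTne with ht_def
      have hupos : ∀ i, 0 < u i := by
        intro i
        simp only [hu_def]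
        split_ifs with hgv
        · have hina : ¬ act i := fun hi => absurd (hGv_act i hi) (not_lt.mpr hgv.le)
          have : (G *ᵥ xs) i < h i := lt_of_le_of_ne (hfeas_ineq i) hina
          exact div_pos (by linarith) hgv
        · exact one_pos
      have ht0 : 0 < t := by
        have hmem : t ∈ T := T.min'_mem hTne
        rw [hT_def, Finset.mem_insert] at hmem
        rcases hmem with h1 | h1
        · rw [h1]; exact one_pos
        · obtain ⟨i, _, hi⟩ := Finset.mem_image.mp h1
          rw [← hi]; exact hupos i
      have htu : ∀ i, t ≤ u i := by
        intro i
        apply Finset.min'_le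
        rw [hT_def]
        exact Finset.mem_insert_of_mem (Finset.mem_image_of_mem u (Finset.mem_univ i))
      have hAv : A *ᵥ v = 0 := by
        rw [hv_def, mulVec_add, mulVec_smul, hAd, hAe]
        simp
      have hfeasA : A *ᵥ (xs + t • v) = b := by
        rw [mulVec_add, mulVec_smul, hAv, hfeas_eq]
        simp
      have hfeasG : ∀ i, (G *ᵥ (xs + t • v)) i ≤ h i := by
        intro i
        have hex : (G *ᵥ (xs + t • v)) i = (G *ᵥ xs) i + t * (G *ᵥ v) i := by
          simp [mulVec_add, mulVec_smul]
        rw [hex]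
        by_cases hgv : 0 < (G *ᵥ v) i
        · have := htu i
          rw [hu_def] at this
          simp only [if_pos hgv] at this
          have : t * (G *ᵥ v) i ≤ h i - (G *ᵥ xs) i := by
            rw [← le_div_iff₀ hgv] at *
            exact this
          linarith
        · have := hfeas_ineq i
          rw [not_lt] at hgv
          nlinarith
      have := hvar (xs + t • v) hfeasA hfeasG
      have hsimp : (xs + t • v) - xs = t • v := by abel
      rw [hsimp, dotProduct_smul, smul_eq_mul] at this
      nlinarith
    have hstep' : ∀ ε : ℝ, 0 < ε → 0 ≤ c ⬝ᵥ d + ε * (c ⬝ᵥ e) := by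
      intro ε hε
      have := hstep ε hε
      rwa [dotProduct_add, dotProduct_smul, smul_eq_mul] at this
    by_contra hneg
    rw [not_le] at hneg
    have hε0 : 0 < (-(c ⬝ᵥ d))/(|c ⬝ᵥ e| + 1) := by
      apply div_pos (by linarith) (by positivity)
    have := hstep' _ hε0
    have habs : c ⬝ᵥ e ≤ |c ⬝ᵥ e| := le_abs_self _
    have habs0 : (0:ℝ) ≤ |c ⬝ᵥ e| := abs_nonneg _
    set M := |c ⬝ᵥ e|
    have hmul : (-(c ⬝ᵥ d))/(M + 1) * (c ⬝ᵥ e) ≤ (-(c ⬝ᵥ d))/(M + 1) * M :=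
      mul_le_mul_of_nonneg_left habs hε0.le
    have hlt : (-(c ⬝ᵥ d))/(M + 1) * M < -(c ⬝ᵥ d) := by
      rw [div_mul_eq_mul_div, div_lt_iff₀ (by linarith : (0:ℝ) < M + 1)]
      nlinarith
    linarith
  obtain ⟨μ, hμ0, hμsum⟩ := farkas a (-c) hfark
  set lam : Fin m → ℝ := fun i => if hi : act i then μ (Sum.inl ⟨i, hi⟩) else 0 with hlam_def
  set nu : Fin p → ℝ :=
    fun j => μ (Sum.inr (Sum.inl j)) - μ (Sum.inr (Sum.inr j)) with hnu_def
  refine ⟨lam, nu, ?_, ?_, ?_⟩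
  · intro i
    rw [hlam_def]
    simp only
    split_ifs with hi
    · exact hμ0 _
    · exact le_rfl
  · -- stationarity
    have hvm : ∀ (k : ℕ) (x : Fin k → ℝ) (M : Matrix (Fin k) (Fin n) ℝ),
        x ᵥ* M = ∑ i, x i • M i := by
      intro k x M
      funext j
      simp [vecMul, dotProduct, Finset.sum_apply]
    have h1 : Aᵀ *ᵥ nu = ∑ j, nu j • A j := by rw [mulVec_transpose, hvm]
    have h2 : Gᵀ *ᵥ lam = ∑ i, lam i • G i := by rw [mulVec_transpose, hvm]
    have h3 : ∑ i : Fin m, lam i • G i = ∑ s : {i : Fin m // act i}, μ (Sum.inl s) • G s.1 := by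
      have e1 : ∑ i ∈ Finset.univ.filter act, lam i • G i = ∑ i : Fin m, lam i • G i :=
        Finset.sum_filter_of_ne (by
          intro i _ hne
          by_contra hi
          apply hne
          simp only [hlam_def]
          rw [dif_neg hi, zero_smul])
      rw [← e1, Finset.sum_subtype (p := act) _ (fun x => by simp) (fun i => lam i • G i)]
      apply Finset.sum_congr rfl
      rintro ⟨i, hi⟩ _
      simp only [hlam_def]
      rw [dif_pos hi]
    have key : Aᵀ *ᵥ nu + Gᵀ *ᵥ lam = -c := by
      rw [h1, h2, h3, hμsum, ha_def]
      rw [Fintype.sum_sum_type, Fintype.sum_sum_type]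
      simp only [Sum.elim_inl, Sum.elim_inr, hnu_def, sub_smul, smul_neg]
      rw [Finset.sum_sub_distrib]
      simp only [Finset.sum_neg_distrib]
      abel
    show c + Aᵀ *ᵥ nu + Gᵀ *ᵥ lam = 0
    rw [add_assoc, key]
    simp
  · intro i
    rw [hlam_def]
    simp only
    split_ifs with hi
    · have hi' : (G *ᵥ xs) i = h i := hi
      rw [hi', sub_self, mul_zero]
    · rw [zero_mul]
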